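/- There exists C > 0 (depending only on R and μ) such that for all Δt ∈ (0,1) and all z ∈ ℂ, |Ψ_Δt(z) - Ψ₀(z)| ≤ C*Δt*e^R*(|z| + e^{4R}*|z|^5), where Ψ₀(z) = R*z - (1+iμ)|z|^2*z and Ψ_Δt(z) = (Φ_Δt(z)-z)/Δt. -/

import Mathlib

open Complex

/-- `α(Δt) = (e^{2RΔt} - 1)/R`. -/
noncomputable def alphaGL (R Δt : ℝ) : ℝ := (Real.exp (2 * R * Δt) - 1) / R

/-- The flow map `Φ_Δt` of the ODE `z' = Rz - (1+iμ)|z|²z`. -/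
noncomputable def PhiFlow (R μ Δt : ℝ) (z : ℂ) : ℂ :=
  ((Real.exp (R * Δt) / Real.sqrt (alphaGL R Δt * ‖z‖ ^ 2 + 1)) : ℂ) *
    Complex.exp (-Complex.I * (μ / 2) * (Real.log (alphaGL R Δt * ‖z‖ ^ 2 + 1) : ℂ)) * z

/-- The time-discrete nonlinearity `Ψ_Δt(z) = (Φ_Δt(z) - z)/Δt`. -/
noncomputable def PsiFlow (R μ Δt : ℝ) (z : ℂ) : ℂ := (PhiFlow R μ Δt z - z) / Δt

/-- The continuous nonlinearity `Ψ₀(z) = Rz - (1+iμ)|z|²z`. -/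
noncomputable def Psi0 (R μ : ℝ) (z : ℂ) : ℂ :=
  R * z - (1 + μ * Complex.I) * (‖z‖ : ℂ) ^ 2 * z

noncomputable def aF (R s t : ℝ) : ℝ := 1 + s * (Real.exp (2*R*t) - 1) / R
noncomputable def cC (μ : ℝ) : ℂ := (1 + μ*Complex.I)/2
noncomputable def gF (R μ s t : ℝ) : ℂ :=
  Complex.exp (((R*t : ℝ) : ℂ) - cC μ * (Real.log (aF R s t) : ℂ))
noncomputable def qF (R s t : ℝ) : ℝ := 2*s*Real.exp (2*R*t) / aF R s t
noncomputable def qdF (R s t : ℝ) : ℝ :=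
  (2*s*Real.exp (2*R*t)*(2*R) * aF R s t - 2*s*Real.exp (2*R*t) * (2*s*Real.exp (2*R*t))) / (aF R s t)^2
noncomputable def g1F (R μ s t : ℝ) : ℂ := gF R μ s t * ((R:ℂ) - cC μ * (qF R s t : ℝ))
noncomputable def g2F (R μ s t : ℝ) : ℂ :=
  gF R μ s t * (((R:ℂ) - cC μ * (qF R s t : ℝ))^2 - cC μ * (qdF R s t : ℝ))

lemma aF_ge_one {R s t : ℝ} (hR : 0 < R) (hs : 0 ≤ s) (ht : 0 ≤ t) : 1 ≤ aF R s t := by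
  have h1 : (1:ℝ) ≤ Real.exp (2*R*t) := by
    rw [Real.one_le_exp_iff]; positivity
  have : 0 ≤ s * (Real.exp (2*R*t) - 1) / R := by
    apply div_nonneg _ hR.le; nlinarith
  unfold aF; linarith

lemma hasDerivAt_aF (R s t : ℝ) (hR : R ≠ 0) :
    HasDerivAt (aF R s) (2*s*Real.exp (2*R*t)) t := by
  have h1 : HasDerivAt (fun t : ℝ => Real.exp (2*R*t)) (Real.exp (2*R*t) * (2*R)) t := by
    simpa using ((hasDerivAt_id t).const_mul (2*R)).exp
  have h2 := (((h1.sub_const 1).const_mul s).div_const R).const_add 1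
  refine h2.congr_deriv ?_
  field_simp

lemma hasDerivAt_qF (R s t : ℝ) (hR : R ≠ 0) (ha : aF R s t ≠ 0) :
    HasDerivAt (qF R s) (qdF R s t) t := by
  have h0 : HasDerivAt (fun t : ℝ => Real.exp (2*R*t)) (Real.exp (2*R*t) * (2*R)) t := by
    simpa using ((hasDerivAt_id t).const_mul (2*R)).exp
  have h1 : HasDerivAt (fun t : ℝ => 2*s*Real.exp (2*R*t)) (2*s*Real.exp (2*R*t)*(2*R)) t := by
    have := h0.const_mul (2*s)
    refine this.congr_deriv ?_; ring
  exact h1.div (hasDerivAt_aF R s t hR) ha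

lemma hasDerivAt_gF (R μ s t : ℝ) (hR : R ≠ 0) (ha : 0 < aF R s t) :
    HasDerivAt (gF R μ s) (g1F R μ s t) t := by
  have hlog : HasDerivAt (fun t => Real.log (aF R s t)) ((aF R s t)⁻¹ * (2*s*Real.exp (2*R*t))) t :=
    (Real.hasDerivAt_log ha.ne').comp t (hasDerivAt_aF R s t hR)
  have hh : HasDerivAt (fun t : ℝ => ((R*t : ℝ) : ℂ) - cC μ * (Real.log (aF R s t) : ℝ))
      ((R:ℂ) - cC μ * (qF R s t : ℝ)) t := by
    have h1 : HasDerivAt (fun t : ℝ => ((R*t : ℝ) : ℂ)) ((R:ℝ) : ℂ) t := by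
      have : HasDerivAt (fun t : ℝ => R*t) R t := by
        simpa using (hasDerivAt_id t).const_mul R
      exact this.ofReal_comp
    have h2 := (hlog.ofReal_comp).const_mul (cC μ)
    have hq' : (aF R s t)⁻¹ * (2*s*Real.exp (2*R*t)) = qF R s t := by
      unfold qF; field_simp
    rw [hq'] at h2
    exact h1.sub h2
  have := hh.cexp
  exact this

lemma hasDerivAt_g1F (R μ s t : ℝ) (hR : R ≠ 0) (ha : 0 < aF R s t) :
    HasDerivAt (g1F R μ s) (g2F R μ s t) t := by
  have hq := (hasDerivAt_qF R s t hR ha.ne').ofReal_comp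
  have hφ : HasDerivAt (fun t => (R:ℂ) - cC μ * (qF R s t : ℝ)) (-(cC μ * (qdF R s t : ℝ))) t := by
    exact ((hasDerivAt_const t (R:ℂ)).sub (hq.const_mul (cC μ))).congr_deriv (by ring)
  have := (hasDerivAt_gF R μ s t hR ha).mul hφ
  refine this.congr_deriv ?_
  unfold g2F g1F; ring

lemma norm_cC_le (μ : ℝ) : ‖cC μ‖ ≤ (1+|μ|)/2 := by
  unfold cC
  rw [norm_div]
  simp only [Complex.norm_ofNat]
  gcongr
  calc ‖(1 : ℂ) + μ*Complex.I‖ ≤ ‖(1:ℂ)‖ + ‖(μ:ℂ)*Complex.I‖ := norm_add_le _ _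
  _ = 1 + |μ| := by simp

lemma norm_gF_le {R μ s t : ℝ} (hR : 0 < R) (hs : 0 ≤ s) (ht : 0 ≤ t) (ht1 : t ≤ 1) :
    ‖gF R μ s t‖ ≤ Real.exp R := by
  have ha := aF_ge_one hR hs ht
  unfold gF
  rw [Complex.norm_exp]
  apply Real.exp_le_exp.mpr
  have hre : (((R*t : ℝ) : ℂ) - cC μ * (Real.log (aF R s t) : ℝ)).re
      = R*t - Real.log (aF R s t)/2 := by
    simp [cC, Complex.div_re]; ring
  rw [hre]
  have hlog : 0 ≤ Real.log (aF R s t) := Real.log_nonneg ha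
  nlinarith

lemma qF_bounds {R s t : ℝ} (hR : 0 < R) (hs : 0 ≤ s) (ht : 0 ≤ t) (ht1 : t ≤ 1) :
    0 ≤ qF R s t ∧ qF R s t ≤ 2*s*Real.exp (2*R) := by
  have ha := aF_ge_one hR hs ht
  have ha0 : 0 < aF R s t := lt_of_lt_of_le one_pos ha
  have he : Real.exp (2*R*t) ≤ Real.exp (2*R) := by
    apply Real.exp_le_exp.mpr; nlinarith
  constructor
  · apply div_nonneg _ ha0.le; positivity
  · unfold qF
    rw [div_le_iff₀ ha0]
    have h1 : 2*s*Real.exp (2*R*t) ≤ 2*s*Real.exp (2*R) := by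
      have := Real.exp_pos (2*R*t); nlinarith
    nlinarith [Real.exp_pos (2*R), mul_nonneg (mul_nonneg (by norm_num : (0:ℝ) ≤ 2) hs) (Real.exp_pos (2*R)).le]

lemma qdF_bound {R s t : ℝ} (hR : 0 < R) (hs : 0 ≤ s) (ht : 0 ≤ t) (ht1 : t ≤ 1) :
    |qdF R s t| ≤ 4*R*s*Real.exp (2*R) + 4*s^2*(Real.exp (2*R))^2 := by
  have ha := aF_ge_one hR hs ht
  have ha0 : 0 < aF R s t := lt_of_lt_of_le one_pos ha
  have he0 : 0 < Real.exp (2*R*t) := Real.exp_pos _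
  have he : Real.exp (2*R*t) ≤ Real.exp (2*R) := by
    apply Real.exp_le_exp.mpr; nlinarith
  have hq := qF_bounds hR hs ht ht1
  have heq : qdF R s t = 4*R*s*Real.exp (2*R*t) / aF R s t - (qF R s t)^2 := by
    unfold qdF qF; field_simp; ring
  rw [heq]
  have h1 : 0 ≤ 4*R*s*Real.exp (2*R*t) / aF R s t := by positivity
  have h2 : 4*R*s*Real.exp (2*R*t) / aF R s t ≤ 4*R*s*Real.exp (2*R) := by
    calc 4*R*s*Real.exp (2*R*t) / aF R s t ≤ 4*R*s*Real.exp (2*R*t) :=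
          div_le_self (by positivity) ha
    _ ≤ 4*R*s*Real.exp (2*R) := mul_le_mul_of_nonneg_left he (by positivity)
  have h3 : (qF R s t)^2 ≤ 4*s^2*(Real.exp (2*R))^2 := by
    nlinarith [hq.1, hq.2]
  rw [abs_sub_le_iff]
  constructor <;> nlinarith [sq_nonneg (qF R s t)]

lemma norm_g2F_le {R μ s t : ℝ} (hR : 0 < R) (hs : 0 ≤ s) (ht : 0 ≤ t) (ht1 : t ≤ 1) :
    ‖g2F R μ s t‖ ≤ Real.exp R *
      ((R^2 + 2*R*(1+|μ|) + (1+|μ|)^2 + 2*(1+|μ|)) * (1 + Real.exp (4*R) * s^2)) := by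
  set D := 1 + |μ| with hD
  have hD1 : 1 ≤ D := by rw [hD]; have := abs_nonneg μ; linarith
  set E := Real.exp (2*R) with hE
  have hE1 : 1 ≤ E := by rw [hE, Real.one_le_exp_iff]; positivity
  have hc : ‖cC μ‖ ≤ D/2 := norm_cC_le μ
  have hq := qF_bounds hR hs ht ht1
  have hqd := qdF_bound hR hs ht ht1
  have hg := norm_gF_le (μ := μ) hR hs ht ht1
  have hE4 : Real.exp (4*R) = E^2 := by rw [hE, sq, ← Real.exp_add]; ring_nf
  unfold g2F
  rw [norm_mul]
  have hφ : ‖(R:ℂ) - cC μ * ((qF R s t : ℝ) : ℂ)‖ ≤ R + D*(s*E) := by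
    calc ‖(R:ℂ) - cC μ * ((qF R s t : ℝ) : ℂ)‖
        ≤ ‖(R:ℂ)‖ + ‖cC μ * ((qF R s t : ℝ) : ℂ)‖ := norm_sub_le _ _
    _ = R + ‖cC μ‖ * qF R s t := by
        simp only [norm_mul, Complex.norm_real, Real.norm_eq_abs,
          _root_.abs_of_nonneg hq.1, _root_.abs_of_nonneg hR.le]
    _ ≤ R + (D/2) * (2*s*E) := by
        have hD0 : (0:ℝ) ≤ D/2 := by linarith
        have := mul_le_mul hc hq.2 hq.1 hD0
        linarith
    _ = R + D*(s*E) := by ring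
  have hin : ‖((R:ℂ) - cC μ * ((qF R s t : ℝ) : ℂ))^2 - cC μ * ((qdF R s t : ℝ) : ℂ)‖
      ≤ (R + D*(s*E))^2 + (D/2)*(4*R*s*E + 4*s^2*E^2) := by
    calc ‖((R:ℂ) - cC μ * ((qF R s t : ℝ) : ℂ))^2 - cC μ * ((qdF R s t : ℝ) : ℂ)‖
        ≤ ‖((R:ℂ) - cC μ * ((qF R s t : ℝ) : ℂ))^2‖ + ‖cC μ * ((qdF R s t : ℝ) : ℂ)‖ :=
          norm_sub_le _ _
    _ = ‖(R:ℂ) - cC μ * ((qF R s t : ℝ) : ℂ)‖^2 + ‖cC μ‖ * |qdF R s t| := by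
        simp only [norm_pow, norm_mul, Complex.norm_real, Real.norm_eq_abs]
    _ ≤ (R + D*(s*E))^2 + (D/2)*(4*R*s*E + 4*s^2*E^2) := by
        have hD0 : (0:ℝ) ≤ D/2 := by linarith
        have h1 : ‖(R:ℂ) - cC μ * ((qF R s t : ℝ) : ℂ)‖^2 ≤ (R + D*(s*E))^2 := by
          apply pow_le_pow_left₀ (norm_nonneg _) hφ
        have h2 := mul_le_mul hc hqd (abs_nonneg _) hD0
        rw [← hE] at h2
        exact add_le_add h1 h2
  calc ‖gF R μ s t‖ * ‖((R:ℂ) - cC μ * ((qF R s t : ℝ) : ℂ))^2 - cC μ * ((qdF R s t : ℝ) : ℂ)‖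
      ≤ Real.exp R * ((R + D*(s*E))^2 + (D/2)*(4*R*s*E + 4*s^2*E^2)) := by
        apply mul_le_mul hg hin (norm_nonneg _) (Real.exp_pos R).le
  _ ≤ Real.exp R * ((R^2 + 2*R*D + D^2 + 2*D) * (1 + Real.exp (4*R) * s^2)) := by
        rw [hE4]
        apply mul_le_mul_of_nonneg_left _ (Real.exp_pos R).le
        nlinarith [mul_nonneg (mul_nonneg hR.le (by linarith : (0:ℝ) ≤ D)) (sq_nonneg (1 - s*E)),
          mul_nonneg (sq_nonneg R) (sq_nonneg (s*E)), sq_nonneg (s*E)]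

lemma aF_zero (R s : ℝ) : aF R s 0 = 1 := by simp [aF]

lemma gF_zero (R μ s : ℝ) : gF R μ s 0 = 1 := by
  simp [gF, aF_zero]

lemma g1F_zero (R μ s : ℝ) : g1F R μ s 0 = (R:ℂ) - (1+μ*Complex.I)*s := by
  have hq : qF R s 0 = 2*s := by simp [qF, aF_zero]
  rw [g1F, gF_zero, hq, cC]
  push_cast
  ring

lemma phi_eq (R μ Δt : ℝ) (hR : 0 < R) (hΔt : 0 ≤ Δt) (z : ℂ) :
    PhiFlow R μ Δt z = gF R μ (‖z‖^2) Δt * z := by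
  have hsz : (0:ℝ) ≤ ‖z‖^2 := sq_nonneg _
  have haeq : alphaGL R Δt * ‖z‖^2 + 1 = aF R (‖z‖^2) Δt := by unfold alphaGL aF; ring
  have ha : 1 ≤ aF R (‖z‖^2) Δt := aF_ge_one hR hsz hΔt
  have ha0 : (0:ℝ) < aF R (‖z‖^2) Δt := lt_of_lt_of_le one_pos ha
  set a := aF R (‖z‖^2) Δt with hadef
  set L := Real.log a with hL
  have hsqrt : Real.sqrt a = Real.exp (L/2) := by
    rw [Real.sqrt_eq_rpow, Real.rpow_def_of_pos ha0]
    congr 1; rw [hL]; ring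
  unfold PhiFlow gF
  rw [haeq, ← hadef, ← hL]
  congr 1
  have hsplit : ((R*Δt : ℝ) : ℂ) - cC μ * (L : ℝ) = ((R*Δt - L/2 : ℝ) : ℂ) + (-Complex.I*(μ/2)*(L:ℝ)) := by
    unfold cC; push_cast; ring
  rw [hsplit, Complex.exp_add, ← Complex.ofReal_exp]
  congr 2
  rw [Real.exp_sub, hsqrt, Complex.ofReal_div]

lemma taylor_bound (R μ : ℝ) (hR : 0 < R) (s : ℝ) (hs : 0 ≤ s) {Δt : ℝ}
    (h0 : 0 < Δt) (h1 : Δt ≤ 1) :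
    ‖gF R μ s Δt - 1 - (Δt:ℂ) * ((R:ℂ) - (1+μ*Complex.I)*s)‖ ≤
      (Real.exp R * ((R^2 + 2*R*(1+|μ|) + (1+|μ|)^2 + 2*(1+|μ|)) * (1 + Real.exp (4*R) * s^2)))
        * Δt^2 := by
  set M := Real.exp R * ((R^2 + 2*R*(1+|μ|) + (1+|μ|)^2 + 2*(1+|μ|)) * (1 + Real.exp (4*R) * s^2))
    with hM
  have hM0 : 0 ≤ M := by rw [hM]; positivity
  set S : Set ℝ := Set.Icc 0 Δt with hS
  have hconv : Convex ℝ S := convex_Icc _ _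
  have h0S : (0:ℝ) ∈ S := ⟨le_refl 0, h0.le⟩
  have hmem : ∀ t ∈ S, 0 ≤ t ∧ t ≤ 1 := fun t ht => ⟨ht.1, ht.2.trans h1⟩
  have hag : ∀ t ∈ S, (0:ℝ) < aF R s t := fun t ht =>
    lt_of_lt_of_le one_pos (aF_ge_one hR hs (hmem t ht).1)
  -- step 1 : bound on g1F increments
  have step1 : ∀ t ∈ S, ‖g1F R μ s t - g1F R μ s 0‖ ≤ M * Δt := by
    intro t htS
    have key := Convex.norm_image_sub_le_of_norm_hasDerivWithin_le
      (f := g1F R μ s) (f' := g2F R μ s) (s := S) (C := M)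
      (fun x hx => (hasDerivAt_g1F R μ s x hR.ne' (hag x hx)).hasDerivWithinAt)
      (fun x hx => norm_g2F_le hR hs (hmem x hx).1 (hmem x hx).2)
      hconv h0S htS
    have : ‖t - 0‖ ≤ Δt := by
      rw [sub_zero, Real.norm_eq_abs, _root_.abs_of_nonneg htS.1]; exact htS.2
    calc ‖g1F R μ s t - g1F R μ s 0‖ ≤ M * ‖t - 0‖ := key
    _ ≤ M * Δt := mul_le_mul_of_nonneg_left this hM0
  -- step 2 : MVT on F t = gF t - t * g1F 0
  have step2 := Convex.norm_image_sub_le_of_norm_hasDerivWithin_le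
    (f := fun t : ℝ => gF R μ s t - (t:ℂ) * g1F R μ s 0)
    (f' := fun t : ℝ => g1F R μ s t - g1F R μ s 0) (s := S) (C := M * Δt)
    (fun x hx => by
      have hid : HasDerivAt (fun t : ℝ => ((t:ℝ):ℂ)) 1 x := by
        simpa using (hasDerivAt_id x).ofReal_comp
      have h2 : HasDerivAt (fun t : ℝ => ((t:ℝ):ℂ) * g1F R μ s 0) (g1F R μ s 0) x := by
        simpa using hid.mul_const (g1F R μ s 0)
      exact ((hasDerivAt_gF R μ s x hR.ne' (hag x hx)).sub h2).hasDerivWithinAt)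
    step1 hconv h0S (Set.right_mem_Icc.mpr h0.le)
  have step2' : ‖(gF R μ s Δt - (Δt:ℂ) * g1F R μ s 0) - (gF R μ s 0 - ((0:ℝ):ℂ) * g1F R μ s 0)‖
      ≤ M * Δt * ‖(Δt:ℝ) - 0‖ := step2
  have hF0 : gF R μ s 0 - ((0:ℝ):ℂ) * g1F R μ s 0 = 1 := by
    rw [gF_zero]; push_cast; ring
  rw [hF0] at step2'
  have hre : ‖(Δt:ℝ) - 0‖ = Δt := by
    rw [sub_zero, Real.norm_eq_abs, _root_.abs_of_nonneg h0.le]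
  rw [hre] at step2'
  calc ‖gF R μ s Δt - 1 - (Δt:ℂ) * ((R:ℂ) - (1+μ*Complex.I)*s)‖
      = ‖gF R μ s Δt - (Δt:ℂ) * g1F R μ s 0 - 1‖ := by rw [g1F_zero]; ring_nf
  _ ≤ M * Δt * Δt := step2'
  _ = M * Δt^2 := by ring

theorem stmt13 (R μ : ℝ) (hR : 0 < R) :
    ∃ C : ℝ, 0 < C ∧ ∀ Δt : ℝ, Δt ∈ Set.Ioo (0 : ℝ) 1 → ∀ z : ℂ,
      ‖PsiFlow R μ Δt z - Psi0 R μ z‖ ≤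
        C * Δt * Real.exp R * (‖z‖ + Real.exp (4 * R) * ‖z‖ ^ 5) := by
  refine ⟨R^2 + 2*R*(1+|μ|) + (1+|μ|)^2 + 2*(1+|μ|), ?_, ?_⟩
  · have h1 : (0:ℝ) < (1+|μ|)^2 := by positivity
    have h2 : (0:ℝ) ≤ 2*R*(1+|μ|) := by positivity
    have h3 : (0:ℝ) ≤ 2*(1+|μ|) := by positivity
    nlinarith [sq_nonneg R]
  · intro Δt hΔt z
    set s := ‖z‖^2 with hsdef
    have hs : (0:ℝ) ≤ s := sq_nonneg _
    have h0 := hΔt.1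
    have h1 := hΔt.2.le
    have key := taylor_bound R μ hR s hs h0 h1
    have hne : (Δt:ℂ) ≠ 0 := by exact_mod_cast h0.ne'
    have hcast : ((s:ℝ):ℂ) = ((‖z‖:ℝ):ℂ)^2 := by rw [hsdef]; push_cast; ring
    have heq : PsiFlow R μ Δt z - Psi0 R μ z =
        ((gF R μ s Δt - 1 - (Δt:ℂ)*((R:ℂ) - (1+μ*Complex.I)*(s:ℝ))) / (Δt:ℂ)) * z := by
      unfold PsiFlow Psi0
      rw [phi_eq R μ Δt hR h0.le z, ← hsdef, ← hcast]
      field_simp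
    have hnormΔ : ‖(Δt:ℂ)‖ = Δt := by
      rw [Complex.norm_real, Real.norm_eq_abs, _root_.abs_of_nonneg h0.le]
    set M := Real.exp R *
      ((R^2 + 2*R*(1+|μ|) + (1+|μ|)^2 + 2*(1+|μ|)) * (1 + Real.exp (4*R) * s^2)) with hM
    calc ‖PsiFlow R μ Δt z - Psi0 R μ z‖
        = ‖gF R μ s Δt - 1 - (Δt:ℂ)*((R:ℂ) - (1+μ*Complex.I)*(s:ℝ))‖ / Δt * ‖z‖ := by
          rw [heq, norm_mul, norm_div, hnormΔ]
    _ ≤ (M * Δt^2) / Δt * ‖z‖ := by gcongr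
    _ = (R^2 + 2*R*(1+|μ|) + (1+|μ|)^2 + 2*(1+|μ|)) * Δt * Real.exp R *
          (‖z‖ + Real.exp (4*R) * ‖z‖^5) := by
          rw [hM, hsdef]
          field_simp
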